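/- Let $X$ be a compact metric space and $f:X\to X$ a continuous map. For every $x\in X$ and $m\ge1$, it holds that $\overline{\omega}(x,f)=\bigcup_{i=0}^{m-1}\overline{\omega}(f^i(x),f^m)$. -/

import Mathlib

open Filter Metric Set
open scoped Classical Topology

noncomputable def upperDensity (A : Set ℕ) : ℝ :=
  Filter.limsup
    (fun n : ℕ => (((Finset.range n).filter (fun i => i ∈ A)).card : ℝ) / n) Filter.atTop

noncomputable def dd (A : Set ℕ) (n : ℕ) : ℝ :=
  (((Finset.range n).filter (fun i => i ∈ A)).card : ℝ) / n

lemma upperDensity_eq (A : Set ℕ) : upperDensity A = Filter.limsup (dd A) Filter.atTop := rfl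

lemma dd_nonneg (A : Set ℕ) (n : ℕ) : 0 ≤ dd A n := by
  unfold dd; positivity

lemma dd_le_one (A : Set ℕ) (n : ℕ) : dd A n ≤ 1 := by
  unfold dd
  rcases Nat.eq_zero_or_pos n with h | h
  · simp [h]
  · rw [div_le_one (by exact_mod_cast h)]
    exact_mod_cast (Finset.card_filter_le _ _).trans (Finset.card_range n).le

lemma dd_bdd (A : Set ℕ) : IsBoundedUnder (· ≤ ·) atTop (dd A) :=
  isBoundedUnder_of ⟨1, fun n => dd_le_one A n⟩

lemma dd_cobdd (A : Set ℕ) : IsCoboundedUnder (· ≤ ·) atTop (dd A) :=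
  isCoboundedUnder_le_of_le atTop (dd_nonneg A)

lemma pos_of_freq {A : Set ℕ} {δ : ℝ} (hδ : 0 < δ) (h : ∃ᶠ n in atTop, δ ≤ dd A n) :
    0 < upperDensity A :=
  lt_of_lt_of_le hδ (by rw [upperDensity_eq]; exact le_limsup_of_frequently_le h (dd_bdd A))

lemma freq_of_pos {A : Set ℕ} (h : 0 < upperDensity A) :
    ∃ δ > 0, ∃ᶠ n in atTop, δ ≤ dd A n := by
  refine ⟨upperDensity A / 2, by linarith, ?_⟩
  have h2 : upperDensity A / 2 < Filter.limsup (dd A) Filter.atTop := by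
    rw [← upperDensity_eq]; linarith
  exact (frequently_lt_of_lt_limsup (dd_cobdd A) h2).mono fun n hn => hn.le

lemma count_mono {A B : Set ℕ} (h : A ⊆ B) (n : ℕ) :
    ((Finset.range n).filter (fun k => k ∈ A)).card ≤
      ((Finset.range n).filter (fun k => k ∈ B)).card :=
  Finset.card_le_card (Finset.monotone_filter_right _ fun k _ hk => h hk)

lemma dd_mono {A B : Set ℕ} (h : A ⊆ B) (n : ℕ) : dd A n ≤ dd B n := by
  unfold dd
  rcases Nat.eq_zero_or_pos n with h0 | h0
  · simp [h0]
  · rw [div_le_div_iff_of_pos_right (by exact_mod_cast h0)]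
    exact_mod_cast count_mono h n

lemma upperDensity_mono {A B : Set ℕ} (h : A ⊆ B) : upperDensity A ≤ upperDensity B := by
  rw [upperDensity_eq, upperDensity_eq]
  exact limsup_le_limsup (Eventually.of_forall (dd_mono h)) (dd_cobdd A) (dd_bdd B)

lemma count_split (A : Set ℕ) (m n : ℕ) (hm : 1 ≤ m) :
    ((Finset.range n).filter (fun k => k ∈ A)).card ≤
      ∑ i ∈ Finset.range m,
        ((Finset.range n).filter (fun k => k ∈ {k' | k' ∈ A ∧ k' % m = i})).card := by
  calc ((Finset.range n).filter (fun k => k ∈ A)).card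
      ≤ ((Finset.range m).biUnion
          (fun i => (Finset.range n).filter (fun k => k ∈ {k' | k' ∈ A ∧ k' % m = i}))).card := by
        apply Finset.card_le_card
        intro k hk
        simp only [Finset.mem_filter, Finset.mem_range, Set.mem_setOf_eq] at hk
        exact Finset.mem_biUnion.mpr ⟨k % m, Finset.mem_range.mpr (Nat.mod_lt k hm),
          Finset.mem_filter.mpr ⟨Finset.mem_range.mpr hk.1, hk.2, rfl⟩⟩
    _ ≤ _ := Finset.card_biUnion_le

lemma count_res_le_pre (A : Set ℕ) (m i n : ℕ) :
    ((Finset.range n).filter (fun k => k ∈ {k' | k' ∈ A ∧ k' % m = i})).card ≤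
      ((Finset.range n).filter (fun j => j ∈ {j' | m * j' + i ∈ A})).card := by
  apply Finset.card_le_card_of_injOn (fun k => k / m)
  · intro k hk
    simp only [Finset.mem_coe, Finset.mem_filter, Finset.mem_range, Set.mem_setOf_eq] at hk ⊢
    refine ⟨lt_of_le_of_lt (Nat.div_le_self k m) hk.1, ?_⟩
    have : m * (k / m) + i = k := by
      conv_rhs => rw [← Nat.div_add_mod k m]
      rw [hk.2.2]
    rw [this]; exact hk.2.1
  · intro a ha b hb hab
    simp only [Finset.coe_filter, Set.mem_setOf_eq, Finset.mem_range] at ha hb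
    have hd : a / m = b / m := hab
    have h1 := Nat.div_add_mod a m
    have h2 := Nat.div_add_mod b m
    rw [ha.2.2] at h1; rw [hb.2.2] at h2
    rw [← h1, ← h2, hd]

lemma count_pre_le_full (A : Set ℕ) (m i N : ℕ) (hi : i < m) :
    ((Finset.range N).filter (fun j => j ∈ {j' | m * j' + i ∈ A})).card ≤
      ((Finset.range (m * N)).filter (fun k => k ∈ A)).card := by
  apply Finset.card_le_card_of_injOn (fun j => m * j + i)
  · intro j hj
    simp only [Finset.mem_coe, Finset.mem_filter, Finset.mem_range, Set.mem_setOf_eq] at hj ⊢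
    refine ⟨?_, hj.2⟩
    calc m * j + i < m * j + m := by omega
      _ ≤ m * N := by rw [← Nat.mul_succ]; exact Nat.mul_le_mul_left m hj.1
  · intro a _ b _ hab
    have hm : 0 < m := lt_of_le_of_lt (Nat.zero_le i) hi
    have hab' : m * a + i = m * b + i := hab
    exact Nat.eq_of_mul_eq_mul_left hm (by omega)

lemma dd_res_le_pre (A : Set ℕ) (m i n : ℕ) :
    dd {k | k ∈ A ∧ k % m = i} n ≤ dd {j | m * j + i ∈ A} n := by
  unfold dd
  rcases Nat.eq_zero_or_pos n with h0 | h0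
  · simp [h0]
  · rw [div_le_div_iff_of_pos_right (by exact_mod_cast h0)]
    have hc := count_res_le_pre A m i n
    have hcr : ((Finset.filter (fun k => k ∈ {k' | k' ∈ A ∧ k' % m = i}) (Finset.range n)).card : ℝ) ≤
        ((Finset.filter (fun j => j ∈ {j' | m * j' + i ∈ A}) (Finset.range n)).card : ℝ) :=
      Nat.cast_le.mpr hc
    convert hcr using 3 <;> congr!

lemma exists_res_pos {A : Set ℕ} {m : ℕ} (hm : 1 ≤ m) (h : 0 < upperDensity A) :
    ∃ i < m, 0 < upperDensity {j | m * j + i ∈ A} := by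
  obtain ⟨δ, hδ, hfreq⟩ := freq_of_pos h
  have key : ∃ᶠ n in atTop, ∃ i ∈ Finset.range m, δ / m ≤ dd {j | m * j + i ∈ A} n := by
    refine hfreq.mono fun n hn => ?_
    rcases Nat.eq_zero_or_pos n with h0 | h0
    · exfalso; rw [h0] at hn; simp [dd] at hn; linarith
    · have hsum : δ ≤ ∑ i ∈ Finset.range m, dd {j | m * j + i ∈ A} n := by
        calc δ ≤ dd A n := hn
          _ ≤ ∑ i ∈ Finset.range m, dd {k | k ∈ A ∧ k % m = i} n := by
              unfold dd
              rw [← Finset.sum_div]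
              rw [div_le_div_iff_of_pos_right (by exact_mod_cast h0 : (0:ℝ) < n)]
              have hc := count_split A m n hm
              have hcr := (Nat.cast_le (α := ℝ)).mpr hc
              push_cast at hcr ⊢
              convert hcr using 3 <;> congr!
          _ ≤ _ := Finset.sum_le_sum fun i _ => dd_res_le_pre A m i n
      have havg : ∑ i ∈ Finset.range m, (δ / m) ≤
          ∑ i ∈ Finset.range m, dd {j | m * j + i ∈ A} n := by
        rw [Finset.sum_const, Finset.card_range, nsmul_eq_mul]
        rw [mul_div_cancel₀ _ (Nat.cast_ne_zero.mpr (by omega))]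
        exact hsum
      exact Finset.exists_le_of_sum_le ⟨0, Finset.mem_range.mpr hm⟩ havg
  have : ∃ i ∈ Finset.range m, ∃ᶠ n in atTop, δ / m ≤ dd {j | m * j + i ∈ A} n := by
    by_contra hcon
    push_neg at hcon
    have hev : ∀ᶠ n in atTop, ∀ i ∈ Finset.range m, ¬ δ / m ≤ dd {j | m * j + i ∈ A} n :=
      (Finset.eventually_all _).mpr fun i hi => not_frequently.mp (by simpa using hcon i hi)
    obtain ⟨n, hn1, hn2⟩ := (key.and_eventually hev).exists
    obtain ⟨i, hi, hle⟩ := hn1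
    exact hn2 i hi hle
  obtain ⟨i, hi, hfr⟩ := this
  have hm' : (0:ℝ) < m := by exact_mod_cast hm
  exact ⟨i, Finset.mem_range.mp hi, pos_of_freq (by positivity) hfr⟩

lemma pos_full_of_pre {C : Set ℕ} {m i : ℕ} (hi : i < m)
    (h : 0 < upperDensity {j | m * j + i ∈ C}) : 0 < upperDensity C := by
  obtain ⟨δ, hδ, hfreq⟩ := freq_of_pos h
  have hm : 0 < m := lt_of_le_of_lt (Nat.zero_le i) hi
  have hmr : (0:ℝ) < m := by exact_mod_cast hm
  apply pos_of_freq (δ := δ / m) (by positivity)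
  have ht : Tendsto (fun N : ℕ => m * N) atTop atTop :=
    tendsto_atTop_mono (fun N => Nat.le_mul_of_pos_left N hm) tendsto_id
  apply ht.frequently
  refine hfreq.mono fun N hN => ?_
  rcases Nat.eq_zero_or_pos N with h0 | h0
  · exfalso; rw [h0] at hN; simp [dd] at hN; linarith
  · have hNr : (0:ℝ) < N := by exact_mod_cast h0
    have hcount : (((Finset.range N).filter (fun j => m * j + i ∈ C)).card : ℝ) ≤
        (((Finset.range (m * N)).filter (fun k => k ∈ C)).card : ℝ) := by
      have hc := count_pre_le_full C m i N hi
      have hcr := (Nat.cast_le (α := ℝ)).mpr hc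
      exact hcr
    have h1 : δ ≤ (((Finset.range (m * N)).filter (fun k => k ∈ C)).card : ℝ) / N := by
      refine hN.trans ?_
      unfold dd
      rw [div_le_div_iff_of_pos_right hNr]
      exact hcount
    unfold dd
    have : ((m * N : ℕ) : ℝ) = (m : ℝ) * N := by push_cast; ring
    rw [this, mul_comm (m:ℝ) (N:ℝ), ← div_div]
    exact (div_le_div_iff_of_pos_right hmr).mpr h1

def HasDensityOne (A : Set ℕ) : Prop :=
  Filter.Tendsto
    (fun n : ℕ => (((Finset.range n).filter (fun i => i ∈ A)).card : ℝ) / n) Filter.atTop (nhds 1)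

def omegaBarSeq {X : Type*} [MetricSpace X] (x : ℕ → X) : Set X :=
  {y | ∀ ε > 0, 0 < upperDensity {i | dist (x i) y < ε}}

def omegaBar {X : Type*} [MetricSpace X] (f : X → X) (x : X) : Set X :=
  omegaBarSeq (fun i => f^[i] x)

lemma iterate_key {α : Type*} (f : α → α) (m i j : ℕ) (x : α) :
    (f^[m])^[j] (f^[i] x) = f^[m * j + i] x := by
  rw [Function.iterate_add_apply, Function.iterate_mul]

theorem stmt8 {X : Type*} [MetricSpace X] [CompactSpace X] (f : X → X) (hf : Continuous f)
    (x : X) (m : ℕ) (hm : 1 ≤ m) :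
    omegaBar f x = ⋃ i ∈ Finset.range m, omegaBar (f^[m]) (f^[i] x) := by
  ext y
  simp only [Set.mem_iUnion, Finset.mem_range, exists_prop]
  constructor
  · intro hy
    have key : ∀ n : ℕ, ∃ i, i < m ∧
        0 < upperDensity {j | m * j + i ∈ {k | dist (f^[k] x) y < 1/(n+1)}} := by
      intro n
      have hε : (0:ℝ) < 1/(n+1) := by positivity
      obtain ⟨i, him, hpos⟩ := exists_res_pos hm (hy _ hε)
      exact ⟨i, him, hpos⟩
    choose g hg1 hg2 using key
    have hfib : ∃ i, i < m ∧ (g ⁻¹' {i}).Infinite := by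
      by_contra hcon
      push_neg at hcon
      have hsub : (Set.univ : Set ℕ) ⊆ ⋃ i ∈ Finset.range m, g ⁻¹' {i} := fun n _ =>
        Set.mem_biUnion (Finset.mem_range.mpr (hg1 n)) rfl
      have hfin : (Set.univ : Set ℕ).Finite :=
        ((Set.Finite.biUnion (Finset.range m).finite_toSet fun i hi =>
          (hcon i (Finset.mem_range.mp hi))).subset hsub)
      exact Set.infinite_univ hfin
    obtain ⟨i, him, hinf⟩ := hfib
    refine ⟨i, him, ?_⟩
    intro ε hε
    obtain ⟨n0, hn0⟩ := exists_nat_one_div_lt hε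
    obtain ⟨n, hnS, hn⟩ := hinf.exists_gt n0
    have hni : g n = i := hnS
    have hlt : 1/((n:ℝ)+1) < ε := by
      refine lt_of_le_of_lt ?_ hn0
      apply one_div_le_one_div_of_le (by positivity)
      have : (n0:ℝ) ≤ n := by exact_mod_cast hn.le
      linarith
    have hp := hg2 n
    rw [hni] at hp
    refine lt_of_lt_of_le hp (upperDensity_mono ?_)
    intro j hj
    simp only [Set.mem_setOf_eq] at hj ⊢
    rw [iterate_key]
    exact hj.trans hlt
  · rintro ⟨i, hi, hyi⟩
    intro ε hε
    have h := hyi ε hε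
    have hset : {j | dist ((fun j => (f^[m])^[j] (f^[i] x)) j) y < ε} =
        {j | m * j + i ∈ {k | dist (f^[k] x) y < ε}} := by
      ext j
      simp only [Set.mem_setOf_eq, iterate_key]
    rw [hset] at h
    exact pos_full_of_pre hi h
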